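/- Let c > 2 be an integer and ℓ a nonzero integer. Then ∑_{b=1}^∞ ∑_{1 ≤ a ≤ b, gcd(a,b)=1} e^{−2πi ℓ a/b} b^{−c} = σ_{1−c}(ℓ)/ζ(c), where σ_{1−c}(ℓ) = ∑_{d ∣ ℓ, d > 0} d^{1−c}. (Ramanujan's identity for Ramanujan sums.) -/

import Mathlib

open Real

open scoped LSeries.notation

/-- The Riemann zeta value `ζ(s) = ∑_{n ≥ 1} n^{-s}` as a real series. -/
noncomputable def zetaR (s : ℝ) : ℝ := ∑' n : ℕ, ((n : ℝ) + 1) ^ (-s)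

private lemma exp_sum_Icc (ℓ : ℤ) (b : ℕ) (hb : 0 < b) :
    ∑ a ∈ Finset.Icc 1 b, Complex.exp (-2 * (π : ℂ) * Complex.I * (ℓ : ℂ) * (a : ℂ) / (b : ℂ))
      = if (b : ℤ) ∣ ℓ then (b : ℂ) else 0 := by
  have hb0 : (b : ℂ) ≠ 0 := Nat.cast_ne_zero.mpr hb.ne'
  set z : ℂ := Complex.exp (-2 * (π : ℂ) * Complex.I * (ℓ : ℂ) / (b : ℂ)) with hz
  have hza : ∀ a : ℕ,
      Complex.exp (-2 * (π : ℂ) * Complex.I * (ℓ : ℂ) * (a : ℂ) / (b : ℂ)) = z ^ a := by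
    intro a
    rw [hz, ← Complex.exp_nat_mul]
    ring_nf
  have hzb : z ^ b = 1 := by
    rw [hz, ← Complex.exp_nat_mul]
    have : (b : ℂ) * (-2 * (π : ℂ) * Complex.I * (ℓ : ℂ) / (b : ℂ))
        = ((-ℓ : ℤ) : ℂ) * (2 * (π : ℂ) * Complex.I) := by
      push_cast; field_simp
    rw [this, Complex.exp_int_mul_two_pi_mul_I]
  by_cases hdvd : (b : ℤ) ∣ ℓ
  · rw [if_pos hdvd]
    obtain ⟨k, hk⟩ := hdvd
    have hz1 : z = 1 := by
      rw [hz]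
      have : -2 * (π : ℂ) * Complex.I * (ℓ : ℂ) / (b : ℂ)
          = ((-k : ℤ) : ℂ) * (2 * (π : ℂ) * Complex.I) := by
        have : (ℓ : ℂ) = (b : ℂ) * (k : ℂ) := by exact_mod_cast congrArg (Int.cast : ℤ → ℂ) hk
        rw [this]; push_cast; field_simp
      rw [this, Complex.exp_int_mul_two_pi_mul_I]
    calc ∑ a ∈ Finset.Icc 1 b,
          Complex.exp (-2 * (π : ℂ) * Complex.I * (ℓ : ℂ) * (a : ℂ) / (b : ℂ))
        = ∑ a ∈ Finset.Icc 1 b, z ^ a := Finset.sum_congr rfl fun a _ => hza a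
      _ = (b : ℂ) := by simp [hz1, Nat.card_Icc]
  · have hpi2I : (-2 * (π : ℂ) * Complex.I) ≠ 0 :=
      mul_ne_zero (mul_ne_zero (by norm_num) (Complex.ofReal_ne_zero.mpr Real.pi_ne_zero))
        Complex.I_ne_zero
    have hz1 : z ≠ 1 := by
      intro h
      apply hdvd
      rw [hz, Complex.exp_eq_one_iff] at h
      obtain ⟨n, hn⟩ := h
      rw [div_eq_iff hb0] at hn
      have hC : (ℓ : ℂ) = (b : ℂ) * (-(n : ℂ)) := by
        have key : (-2 * (π : ℂ) * Complex.I) * (ℓ : ℂ)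
            = (-2 * (π : ℂ) * Complex.I) * ((b : ℂ) * (-(n : ℂ))) := by
          linear_combination hn
        exact mul_left_cancel₀ hpi2I key
      exact ⟨-n, by exact_mod_cast hC⟩
    rw [if_neg hdvd]
    calc ∑ a ∈ Finset.Icc 1 b,
          Complex.exp (-2 * (π : ℂ) * Complex.I * (ℓ : ℂ) * (a : ℂ) / (b : ℂ))
        = ∑ a ∈ Finset.Icc 1 b, z ^ a := by simp_rw [hza]
      _ = ∑ i ∈ Finset.range b, z ^ (1 + i) := by
          rw [← Finset.Ico_add_one_right_eq_Icc, Finset.sum_Ico_eq_sum_range]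
          simp
      _ = z * ((z ^ b - 1) / (z - 1)) := by
          simp_rw [pow_add, pow_one, ← Finset.mul_sum, geom_sum_eq hz1]
      _ = 0 := by rw [hzb]; simp

private lemma ramanujan_divisor_sum (ℓ : ℤ) (b : ℕ) (hb : 0 < b) :
    ∑ d ∈ b.divisors,
        (∑ a ∈ (Finset.Icc 1 d).filter (fun a => Nat.gcd a d = 1),
          Complex.exp (-2 * (π : ℂ) * Complex.I * (ℓ : ℂ) * (a : ℂ) / (d : ℂ)))
      = if (b : ℤ) ∣ ℓ then (b : ℂ) else 0 := by
  rw [← exp_sum_Icc ℓ b hb, Finset.sum_sigma']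
  refine Finset.sum_nbij' (i := fun p => p.2 * (b / p.1))
    (j := fun a => ⟨b / Nat.gcd a b, a / Nat.gcd a b⟩) ?_ ?_ ?_ ?_ ?_
  · rintro ⟨d, a⟩ hp
    simp only [Finset.mem_sigma, Nat.mem_divisors, Finset.mem_filter, Finset.mem_Icc] at hp
    obtain ⟨⟨hd, -⟩, ⟨ha1, ha2⟩, hgcd⟩ := hp
    have hd0 : 0 < d := Nat.pos_of_dvd_of_pos hd hb
    have hbd : 0 < b / d := Nat.div_pos (Nat.le_of_dvd hb hd) hd0
    simp only [Finset.mem_Icc]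
    constructor
    · exact Nat.one_le_iff_ne_zero.mpr (Nat.mul_ne_zero (by omega) hbd.ne')
    · calc a * (b / d) ≤ d * (b / d) := Nat.mul_le_mul_right _ ha2
        _ = b := Nat.mul_div_cancel' hd
  · intro a ha
    simp only [Finset.mem_Icc] at ha
    obtain ⟨ha1, ha2⟩ := ha
    have ha0 : 0 < a := ha1
    have hg : 0 < Nat.gcd a b := Nat.gcd_pos_of_pos_left _ ha0
    have hgb : Nat.gcd a b ∣ b := Nat.gcd_dvd_right a b
    have hga : Nat.gcd a b ∣ a := Nat.gcd_dvd_left a b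
    simp only [Finset.mem_sigma, Nat.mem_divisors, Finset.mem_filter, Finset.mem_Icc]
    refine ⟨⟨Nat.div_dvd_of_dvd hgb, hb.ne'⟩, ⟨?_, ?_⟩, ?_⟩
    · exact Nat.one_le_iff_ne_zero.mpr (Nat.div_ne_zero_iff_of_dvd hga |>.mpr ⟨ha0.ne', hg.ne'⟩)
    · exact Nat.div_le_div_right ha2
    · exact Nat.coprime_div_gcd_div_gcd hg
  · rintro ⟨d, a⟩ hp
    simp only [Finset.mem_sigma, Nat.mem_divisors, Finset.mem_filter, Finset.mem_Icc] at hp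
    obtain ⟨⟨hd, -⟩, ⟨ha1, ha2⟩, hgcd⟩ := hp
    have hd0 : 0 < d := Nat.pos_of_dvd_of_pos hd hb
    have hbd : 0 < b / d := Nat.div_pos (Nat.le_of_dvd hb hd) hd0
    have hbeq : b = d * (b / d) := (Nat.mul_div_cancel' hd).symm
    have hgcdkey : Nat.gcd (a * (b / d)) b = b / d := by
      nth_rewrite 2 [hbeq]
      rw [Nat.gcd_mul_right, hgcd, one_mul]
    have h1 : b / (b / d) = d := Nat.div_div_self hd hb.ne'
    show (⟨b / Nat.gcd (a * (b / d)) b, (a * (b / d)) / Nat.gcd (a * (b / d)) b⟩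
        : Σ _ : ℕ, ℕ) = ⟨d, a⟩
    rw [hgcdkey, h1, Nat.mul_div_cancel _ hbd]
  · intro a ha
    simp only [Finset.mem_Icc] at ha
    have ha0 : 0 < a := ha.1
    have hg : 0 < Nat.gcd a b := Nat.gcd_pos_of_pos_left _ ha0
    have hgb : Nat.gcd a b ∣ b := Nat.gcd_dvd_right a b
    have hga : Nat.gcd a b ∣ a := Nat.gcd_dvd_left a b
    have h1 : b / (b / Nat.gcd a b) = Nat.gcd a b := Nat.div_div_self hgb hb.ne'
    simp only [h1]
    exact Nat.div_mul_cancel hga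
  · rintro ⟨d, a⟩ hp
    simp only [Finset.mem_sigma, Nat.mem_divisors, Finset.mem_filter, Finset.mem_Icc] at hp
    obtain ⟨⟨hd, -⟩, ⟨ha1, ha2⟩, hgcd⟩ := hp
    have hd0 : (d : ℂ) ≠ 0 := Nat.cast_ne_zero.mpr (Nat.pos_of_dvd_of_pos hd hb).ne'
    have hb0 : (b : ℂ) ≠ 0 := Nat.cast_ne_zero.mpr hb.ne'
    congr 1
    have hnat : a * (b / d) * d = a * b := by
      rw [mul_assoc, mul_comm (b / d) d, Nat.mul_div_cancel' hd]
    have key : ((a * (b / d) : ℕ) : ℂ) * d = (a : ℂ) * b := by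
      exact_mod_cast congrArg (Nat.cast : ℕ → ℂ) hnat
    rw [div_eq_div_iff hd0 hb0]
    linear_combination (2 * (π : ℂ) * Complex.I * (ℓ : ℂ)) * key

theorem stmt4 (c : ℕ) (hc : 2 < c) (ℓ : ℤ) (hℓ : ℓ ≠ 0) :
    (∑' b : ℕ+,
        (∑ a ∈ (Finset.Icc 1 (b : ℕ)).filter (fun a => Nat.gcd a (b : ℕ) = 1),
            Complex.exp (-2 * (π : ℂ) * Complex.I * (ℓ : ℂ) * (a : ℂ) / ((b : ℕ) : ℂ))) *
          ((b : ℕ) : ℂ) ^ (-(c : ℤ)))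
      = ((∑ d ∈ ℓ.natAbs.divisors, (d : ℝ) ^ (1 - (c : ℤ))) / zetaR c : ℝ) := by
  classical
  have hsre : 1 < ((c : ℂ)).re := by
    simp only [Complex.natCast_re]
    exact_mod_cast (by omega : 1 < c)
  set Rf : ℕ → ℂ := fun b =>
    ∑ a ∈ (Finset.Icc 1 b).filter (fun a => Nat.gcd a b = 1),
      Complex.exp (-2 * (π : ℂ) * Complex.I * (ℓ : ℂ) * (a : ℂ) / (b : ℂ)) with hRf
  set gf : ℕ → ℂ := fun n => if (n : ℤ) ∣ ℓ then (n : ℂ) else 0 with hgf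
  -- Möbius inversion: Rf = μ ⍟ gf on positive naturals
  have hinv : ∀ n > 0, ∑ x ∈ n.divisorsAntidiagonal,
      ArithmeticFunction.moebius x.fst • gf x.snd = Rf n :=
    (ArithmeticFunction.sum_eq_iff_sum_smul_moebius_eq (f := Rf) (g := gf)).mp
      (fun n hn => ramanujan_divisor_sum ℓ n hn)
  have hconv : ∀ {n : ℕ}, n ≠ 0 → Rf n = (↗ArithmeticFunction.moebius ⍟ gf) n := by
    intro n hn
    rw [← hinv n (Nat.pos_of_ne_zero hn), LSeries.convolution_def]
    refine Finset.sum_congr rfl fun x hx => ?_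
    simp [zsmul_eq_mul]
  -- summability
  have hμ : LSeriesSummable ↗ArithmeticFunction.moebius (c : ℂ) :=
    ArithmeticFunction.LSeriesSummable_moebius_iff.mpr hsre
  have hgsupp : ∀ n ∉ ℓ.natAbs.divisors, LSeries.term gf (c : ℂ) n = 0 := by
    intro n hn
    rcases eq_or_ne n 0 with rfl | hn0
    · exact LSeries.term_zero _ _
    · have : ¬ (n : ℤ) ∣ ℓ := by
        intro hdvd
        exact hn (Nat.mem_divisors.mpr ⟨Int.ofNat_dvd.mp (Int.dvd_natAbs.mpr hdvd),
          Int.natAbs_ne_zero.mpr hℓ⟩)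
      simp [LSeries.term, hn0, hgf, this]
  have hg : LSeriesSummable gf (c : ℂ) :=
    summable_of_ne_finset_zero hgsupp
  have hRsummable : Summable (LSeries.term Rf (c : ℂ)) :=
    (LSeriesSummable_congr (c : ℂ) hconv).mpr (hμ.convolution hg)
  -- LHS is the L-series of Rf
  have hLHS : (∑' b : ℕ+,
        (∑ a ∈ (Finset.Icc 1 (b : ℕ)).filter (fun a => Nat.gcd a (b : ℕ) = 1),
            Complex.exp (-2 * (π : ℂ) * Complex.I * (ℓ : ℂ) * (a : ℂ) / ((b : ℕ) : ℂ))) *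
          ((b : ℕ) : ℂ) ^ (-(c : ℤ)))
      = LSeries Rf (c : ℂ) := by
    have heq := (Equiv.pnatEquivNat.symm.tsum_eq
      (fun b : ℕ+ => Rf (b : ℕ) * ((b : ℕ) : ℂ) ^ (-(c : ℤ)))).symm
    rw [hRf] at heq
    rw [heq, LSeries, Summable.tsum_eq_zero_add hRsummable, LSeries.term_zero, zero_add]
    refine tsum_congr fun n => ?_
    have hn1 : ((Equiv.pnatEquivNat.symm n : ℕ+) : ℕ) = n + 1 := rfl
    rw [LSeries.term_def, if_neg (Nat.succ_ne_zero n), hn1, div_eq_mul_inv]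
    congr 1
    rw [Complex.cpow_natCast, zpow_neg, zpow_natCast]
  rw [hLHS, LSeries_congr hconv (c : ℂ),
    LSeries_convolution' hμ hg]
  -- compute LSeries gf
  have hLg : LSeries gf (c : ℂ)
      = ((∑ d ∈ ℓ.natAbs.divisors, (d : ℝ) ^ (1 - (c : ℤ)) : ℝ) : ℂ) := by
    rw [LSeries, tsum_eq_sum hgsupp, Complex.ofReal_sum]
    refine Finset.sum_congr rfl fun d hd => ?_
    obtain ⟨hdvd, -⟩ := Nat.mem_divisors.mp hd
    have hd0 : d ≠ 0 := fun h => by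
      subst h; exact Int.natAbs_ne_zero.mpr hℓ (Nat.eq_zero_of_zero_dvd hdvd)
    have hdl : (d : ℤ) ∣ ℓ := Int.dvd_natAbs.mp (Int.ofNat_dvd.mpr hdvd)
    have hdc : (d : ℂ) ≠ 0 := Nat.cast_ne_zero.mpr hd0
    rw [LSeries.term_def]
    simp only [hd0, if_false, hgf, if_pos hdl]
    rw [Complex.cpow_natCast, Complex.ofReal_zpow]
    push_cast
    rw [zpow_sub₀ hdc, zpow_one, zpow_natCast, div_eq_mul_inv]
  -- zetaR c is the L-series of 1
  have hz1 : ((zetaR c : ℝ) : ℂ) = LSeries 1 (c : ℂ) := by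
    rw [zetaR, Complex.ofReal_tsum, LSeries,
      Summable.tsum_eq_zero_add (LSeriesSummable_one_iff.mpr hsre), LSeries.term_zero, zero_add]
    refine tsum_congr fun n => ?_
    have hpos : (0 : ℝ) < (n : ℝ) + 1 := by positivity
    rw [LSeries.term_def, if_neg (Nat.succ_ne_zero n), Pi.one_apply, Complex.cpow_natCast,
      Real.rpow_neg hpos.le, Real.rpow_natCast, Complex.ofReal_inv, Complex.ofReal_pow,
      one_div]
    norm_num
  have hmul : LSeries 1 (c : ℂ) * LSeries ↗ArithmeticFunction.moebius (c : ℂ) = 1 :=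
    LSeries_one_mul_Lseries_moebius hsre
  have hzne : ((zetaR c : ℝ) : ℂ) ≠ 0 := by
    rw [hz1]
    intro h
    rw [h, zero_mul] at hmul
    exact zero_ne_one hmul
  have hμval : LSeries ↗ArithmeticFunction.moebius (c : ℂ) = (LSeries 1 (c : ℂ))⁻¹ :=
    (inv_eq_of_mul_eq_one_right hmul).symm
  rw [hμval, hLg, ← hz1, Complex.ofReal_div, div_eq_mul_inv]
  ring
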